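/- Let 𝒳 ⊆ ℝ^d be a convex set, τ ≥ 0, and let f : ℝ^d → ℝ be τ-weakly convex. Fix z ∈ 𝒳, ρ > τ, α > 0. Let ŵ ∈ 𝒳 minimize y ↦ f(y) + (ρ/2)‖y − z‖² over 𝒳, let G : ℝ^d → ℝ be α-strongly convex with minimizer u over 𝒳, and let H : ℝ^d → ℝ be α-strongly convex with minimizer v over 𝒳. Then (α/2)‖v − ŵ‖² + ((ρ−τ)/2)‖u − ŵ‖² + (α/2)‖v − u‖² + (ρ/2)‖ŵ − z‖² − (ρ/2)‖u − z‖² ≤ (H(ŵ) − f(ŵ)) + (G(v) − H(v)) + (f(u) − G(u)). (Deterministic core inequality in the proof of Proposition 7.) -/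

import Mathlib

lemma strong_min {E : Type*} [NormedAddCommGroup E] [InnerProductSpace ℝ E]
    {μ : ℝ} {g : E → ℝ}
    (hg : ConvexOn ℝ (Set.univ : Set E) (fun x => g x - μ / 2 * ‖x‖ ^ 2))
    {X : Set E} (hX : Convex ℝ X) {x : E} (hx : x ∈ X)
    (hmin : ∀ y ∈ X, g x ≤ g y) {y : E} (hy : y ∈ X) :
    g x + μ / 2 * ‖y - x‖ ^ 2 ≤ g y := by
  have key : ∀ t ∈ Set.Ioo (0:ℝ) 1, g x + μ / 2 * (1 - t) * ‖y - x‖ ^ 2 ≤ g y := by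
    rintro t ⟨ht0, ht1⟩
    have hmem : (1 - t) • x + t • y ∈ X := hX hx hy (by linarith) ht0.le (by ring)
    have h1 : g x ≤ g ((1 - t) • x + t • y) := hmin _ hmem
    have h2 := hg.2 (Set.mem_univ x) (Set.mem_univ y)
      (show (0:ℝ) ≤ 1 - t by linarith) ht0.le (by ring : (1 - t) + t = 1)
    simp only [smul_eq_mul] at h2
    have hnorm : ‖(1 - t) • x + t • y‖ ^ 2
        = (1 - t) ^ 2 * ‖x‖ ^ 2 + 2 * ((1 - t) * t) * (inner ℝ x y : ℝ) + t ^ 2 * ‖y‖ ^ 2 := by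
      rw [norm_add_sq_real, norm_smul, norm_smul, real_inner_smul_left,
        real_inner_smul_right, Real.norm_eq_abs, Real.norm_eq_abs,
        abs_of_nonneg (by linarith : (0:ℝ) ≤ 1 - t), abs_of_nonneg ht0.le]
      ring
    have hyx : ‖y - x‖ ^ 2 = ‖y‖ ^ 2 - 2 * (inner ℝ x y : ℝ) + ‖x‖ ^ 2 := by
      rw [norm_sub_sq_real, real_inner_comm y x]
    rw [hnorm] at h2
    have h3 : t * (g x + μ / 2 * (1 - t) * ‖y - x‖ ^ 2) ≤ t * g y := by
      rw [hyx]; nlinarith [h1, h2]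
    exact le_of_mul_le_mul_left h3 ht0
  have hten : Filter.Tendsto (fun t : ℝ => g x + μ / 2 * (1 - t) * ‖y - x‖ ^ 2)
      (nhdsWithin 0 (Set.Ioi 0)) (nhds (g x + μ / 2 * ‖y - x‖ ^ 2)) := by
    have hc : Continuous fun t : ℝ => g x + μ / 2 * (1 - t) * ‖y - x‖ ^ 2 := by continuity
    have h0 := (hc.tendsto 0).mono_left (nhdsWithin_le_nhds (s := Set.Ioi (0:ℝ)))
    simpa using h0
  refine le_of_tendsto hten ?_
  filter_upwards [Ioo_mem_nhdsGT_of_mem (by norm_num : (0:ℝ) ∈ Set.Ico (0:ℝ) 1)] with t ht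
  exact key t ht

/-- **Deterministic core inequality in the proof of Proposition 7.**
Let `𝒳 ⊆ ℝ^d` be convex, `f` be `τ`-weakly convex, `z ∈ 𝒳`, `ρ > τ`, `α > 0`.
Let `w` minimize `y ↦ f y + (ρ/2)‖y − z‖²` over `𝒳`, let `G` be `α`-strongly convex with
minimizer `u` over `𝒳`, and let `H` be `α`-strongly convex with minimizer `v` over `𝒳`. Then
`(α/2)‖v − w‖² + ((ρ−τ)/2)‖u − w‖² + (α/2)‖v − u‖² + (ρ/2)‖w − z‖² − (ρ/2)‖u − z‖²
  ≤ (H w − f w) + (G v − H v) + (f u − G u)`. -/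
theorem core_inequality {d : ℕ}
    (X : Set (EuclideanSpace ℝ (Fin d))) (hXconv : Convex ℝ X)
    (τ : ℝ) (hτ : 0 ≤ τ)
    (f : EuclideanSpace ℝ (Fin d) → ℝ)
    (hf : ConvexOn ℝ Set.univ (fun x => f x + τ / 2 * ‖x‖ ^ 2))
    (z : EuclideanSpace ℝ (Fin d)) (hz : z ∈ X)
    (ρ α : ℝ) (hρ : τ < ρ) (hα : 0 < α)
    (w : EuclideanSpace ℝ (Fin d)) (hwX : w ∈ X)
    (hw : ∀ y ∈ X, f w + ρ / 2 * ‖w - z‖ ^ 2 ≤ f y + ρ / 2 * ‖y - z‖ ^ 2)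
    (G : EuclideanSpace ℝ (Fin d) → ℝ)
    (hG : ConvexOn ℝ Set.univ (fun x => G x - α / 2 * ‖x‖ ^ 2))
    (u : EuclideanSpace ℝ (Fin d)) (huX : u ∈ X) (hu : ∀ x ∈ X, G u ≤ G x)
    (H : EuclideanSpace ℝ (Fin d) → ℝ)
    (hH : ConvexOn ℝ Set.univ (fun x => H x - α / 2 * ‖x‖ ^ 2))
    (v : EuclideanSpace ℝ (Fin d)) (hvX : v ∈ X) (hv : ∀ x ∈ X, H v ≤ H x) :
    α / 2 * ‖v - w‖ ^ 2 + (ρ - τ) / 2 * ‖u - w‖ ^ 2 + α / 2 * ‖v - u‖ ^ 2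
      + ρ / 2 * ‖w - z‖ ^ 2 - ρ / 2 * ‖u - z‖ ^ 2
      ≤ (H w - f w) + (G v - H v) + (f u - G u) := by
  -- strong convexity of the proximal objective
  have hg1 : ConvexOn ℝ (Set.univ : Set (EuclideanSpace ℝ (Fin d)))
      (fun y => (f y + ρ / 2 * ‖y - z‖ ^ 2) - (ρ - τ) / 2 * ‖y‖ ^ 2) := by
    have haff : ConvexOn ℝ (Set.univ : Set (EuclideanSpace ℝ (Fin d)))
        (fun y => ρ / 2 * ‖z‖ ^ 2 - ρ * (inner ℝ z y : ℝ)) := by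
      refine ⟨convex_univ, fun a _ b _ s t hs ht hst => ?_⟩
      simp only [inner_add_right, real_inner_smul_right, smul_eq_mul]
      have h : t = 1 - s := by linarith
      subst h; apply le_of_eq; ring
    have heq : (fun y : EuclideanSpace ℝ (Fin d) =>
        (f y + ρ / 2 * ‖y - z‖ ^ 2) - (ρ - τ) / 2 * ‖y‖ ^ 2)
        = fun y => (f y + τ / 2 * ‖y‖ ^ 2) + (ρ / 2 * ‖z‖ ^ 2 - ρ * (inner ℝ z y : ℝ)) := by
      funext y
      rw [norm_sub_sq_real, real_inner_comm]
      ring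
    rw [heq]
    exact hf.add haff
  have A1 : (f w + ρ / 2 * ‖w - z‖ ^ 2) + (ρ - τ) / 2 * ‖u - w‖ ^ 2
      ≤ f u + ρ / 2 * ‖u - z‖ ^ 2 :=
    strong_min hg1 hXconv hwX hw huX
  have A2 : G u + α / 2 * ‖v - u‖ ^ 2 ≤ G v :=
    strong_min hG hXconv huX hu hvX
  have A3 : H v + α / 2 * ‖w - v‖ ^ 2 ≤ H w :=
    strong_min hH hXconv hvX hv hwX
  rw [show ‖w - v‖ = ‖v - w‖ from norm_sub_rev w v] at A3
  linarith
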